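/- Let ρ be a finite Borel measure on ℝⁿ and f(x) = ∫ e^{x·ξ} ρ(dξ). Suppose g: ℝⁿ → [1,∞) is locally bounded submultiplicative with directional exponents β(ω), and suppose 0 ≤ f(x) ≤ g(x) for all x. Then the support of ρ is contained in Π_g = {ξ : ξ·ω ≤ β(ω) for all ω ∈ S^{n−1}}. -/

import Mathlib

open Filter MeasureTheory
open scoped RealInnerProductSpace

/-- if `f(x) = ∫ e^{x·ξ} ρ(dξ)` (a finite measure's bilateral Laplace
transform, assumed finite) satisfies `0 ≤ f ≤ g` for a locally bounded submultiplicative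
`g ≥ 1` with directional exponents `β(ω)`, then `supp ρ ⊆ Π_g`. -/
theorem stmt13 (n : ℕ) (ρ : Measure (EuclideanSpace ℝ (Fin n))) [IsFiniteMeasure ρ]
    (g : EuclideanSpace ℝ (Fin n) → ℝ) (c : ℝ) (hc : 1 ≤ c)
    (hge : ∀ x, 1 ≤ g x)
    (hloc : ∀ K : Set (EuclideanSpace ℝ (Fin n)), IsCompact K → ∃ M : ℝ, ∀ x ∈ K, g x ≤ M)
    (hsub : ∀ x y, g (x + y) ≤ c * g x * g y)
    (β : EuclideanSpace ℝ (Fin n) → ℝ)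
    (hβ : ∀ ω : EuclideanSpace ℝ (Fin n), ‖ω‖ = 1 →
      Tendsto (fun r : ℝ => Real.log (g (r • ω)) / r) atTop (nhds (β ω)))
    (f : EuclideanSpace ℝ (Fin n) → ℝ)
    (hint : ∀ x, Integrable (fun ξ => Real.exp (⟪x, ξ⟫)) ρ)
    (hf : ∀ x, f x = ∫ ξ, Real.exp (⟪x, ξ⟫) ∂ρ)
    (hbound : ∀ x, f x ≤ g x) :
    ∀ ξ : EuclideanSpace ℝ (Fin n),
      (∀ U : Set (EuclideanSpace ℝ (Fin n)), IsOpen U → ξ ∈ U → 0 < ρ U) →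
      ∀ ω : EuclideanSpace ℝ (Fin n), ‖ω‖ = 1 → ⟪ξ, ω⟫ ≤ β ω := by
  intro ξ hξ ω hω
  refine le_of_forall_pos_le_add ?_
  intro ε hε
  set a : ℝ := ⟪ξ, ω⟫ - ε with ha
  -- the open set where the inner product exceeds a
  set U : Set (EuclideanSpace ℝ (Fin n)) := {η | a < ⟪ω, η⟫} with hU
  have hUopen : IsOpen U := by
    have : Continuous fun η : EuclideanSpace ℝ (Fin n) => ⟪ω, η⟫ :=
      continuous_const.inner continuous_id
    exact isOpen_lt continuous_const this
  have hξU : ξ ∈ U := by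
    simp only [hU, Set.mem_setOf_eq, ha, real_inner_comm ω ξ]
    linarith
  have hρU : 0 < ρ U := hξ U hUopen hξU
  have hρUfin : ρ U ≠ ⊤ := measure_ne_top ρ U
  set m : ℝ := (ρ U).toReal with hm
  have hm0 : 0 < m := ENNReal.toReal_pos hρU.ne' hρUfin
  have hUmeas : MeasurableSet U := hUopen.measurableSet
  -- key lower bound: for r ≥ 0, m * exp (r * a) ≤ f (r • ω)
  have key : ∀ r : ℝ, 0 ≤ r → m * Real.exp (r * a) ≤ f (r • ω) := by
    intro r hr
    rw [hf]
    have hint' := hint (r • ω)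
    have hnonneg : 0 ≤ᵐ[ρ] fun η => Real.exp (⟪r • ω, η⟫) :=
      Filter.Eventually.of_forall fun η => (Real.exp_pos _).le
    have h1 : ∫ η in U, Real.exp (⟪r • ω, η⟫) ∂ρ ≤ ∫ η, Real.exp (⟪r • ω, η⟫) ∂ρ :=
      setIntegral_le_integral hint' hnonneg
    have h2 : Real.exp (r * a) * m ≤ ∫ η in U, Real.exp (⟪r • ω, η⟫) ∂ρ := by
      apply setIntegral_ge_of_const_le_real hUmeas hρUfin
      · intro η hη
        rw [real_inner_smul_left]
        exact Real.exp_le_exp.2 (mul_le_mul_of_nonneg_left (le_of_lt hη) hr)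
      · exact hint'.integrableOn
    calc m * Real.exp (r * a) = Real.exp (r * a) * m := mul_comm _ _
      _ ≤ ∫ η in U, Real.exp (⟪r • ω, η⟫) ∂ρ := h2
      _ ≤ _ := h1
  -- hence log g (r • ω) / r ≥ log m / r + a for r > 0
  have hev : ∀ᶠ r : ℝ in atTop, Real.log m / r + a ≤ Real.log (g (r • ω)) / r := by
    filter_upwards [eventually_gt_atTop (0 : ℝ)] with r hr
    have h1 : m * Real.exp (r * a) ≤ g (r • ω) :=
      (key r hr.le).trans (hbound _)
    have h2 : Real.log (m * Real.exp (r * a)) ≤ Real.log (g (r • ω)) :=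
      Real.log_le_log (by positivity) h1
    rw [Real.log_mul hm0.ne' (Real.exp_ne_zero _), Real.log_exp] at h2
    rw [div_add' _ _ _ hr.ne', div_le_div_iff_of_pos_right hr]
    linarith
  have hlim : Tendsto (fun r : ℝ => Real.log m / r + a) atTop (nhds a) := by
    have : Tendsto (fun r : ℝ => Real.log m / r) atTop (nhds 0) :=
      tendsto_const_nhds.div_atTop tendsto_id
    simpa using this.add tendsto_const_nhds
  have : a ≤ β ω := le_of_tendsto_of_tendsto hlim (hβ ω hω) hev
  linarith
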